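/- Let B₁,…,B_r be connected building sets on pairwise disjoint finite sets S₁,…,S_r of positive integers, and let B = B₁ ⊔ ⋯ ⊔ B_r ⊔ {S} be the combined connected building set on S = S₁ ∪ ⋯ ∪ S_r. Then the h-polynomial satisfies h_B(t) = (1 + t + ⋯ + t^{r-1}) · ∏_{i=1}^r h_{B_i}(t), as an identity of polynomials in ℤ[t]. -/

import Mathlib

open scoped Classical

noncomputable section

/-- A rooted tree on the vertex set `S ⊆ ℕ`, encoded by its root and its parent
function; edges are directed away from the root (so each non-root vertex `i`
carries the edge `(i, parent i)`, with `parent i` closer to the root).  The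
parent function is normalized to be the identity outside `S` and at the root. -/
structure RTree (S : Finset ℕ) where
  root : ℕ
  root_mem : root ∈ S
  parent : ℕ → ℕ
  parent_out : ∀ i, i ∉ S → parent i = i
  parent_root : parent root = root
  parent_mem : ∀ i ∈ S, parent i ∈ S
  reach : ∀ i ∈ S, ∃ k, parent^[k] i = root

namespace RTree

variable {S : Finset ℕ}

/-- The set `T_{≤ i}` of descendants of `i` in `T` (including `i` itself). -/
def desc (T : RTree S) (i : ℕ) : Finset ℕ :=
  S.filter fun j => ∃ k, T.parent^[k] j = i

/-- The depth of a vertex: its distance to the root. -/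
def dp (T : RTree S) (x : ℕ) : ℕ :=
  sInf {k | T.parent^[k] x = T.root}

/-- The depth of the tree: the maximal depth of a vertex. -/
def depth (T : RTree S) : ℕ := S.sup T.dp

/-- The set of descent edges `(i, parent i)` with `i > parent i`, recorded by
the child endpoint `i`. -/
def desSet (T : RTree S) : Finset ℕ :=
  S.filter fun i => i ≠ T.root ∧ T.parent i < i

/-- The number of descents of `T`. -/
def des (T : RTree S) : ℕ := T.desSet.card

/-- The major index of `T`: the sum, over all descent edges `(i,j)` of `T`
(with `j = parent i`), of `depth T - dp j`, i.e. of the minimal rank of `j`. -/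
def maj (T : RTree S) : ℕ :=
  ∑ i ∈ T.desSet, (T.depth - T.dp (T.parent i))

/-- The statistic `μ(T)`: the sum, over all edges `(i,j)` of `T`
(with `j = parent i`), of `depth T - dp j`. -/
def mu (T : RTree S) : ℕ :=
  ∑ i ∈ S.filter (fun i => i ≠ T.root), (T.depth - T.dp (T.parent i))

end RTree

/-- `B` is a building set on the finite ground set `S`. -/
def IsBuildingSet (S : Finset ℕ) (B : Finset (Finset ℕ)) : Prop :=
  (∀ I ∈ B, I ⊆ S ∧ I.Nonempty) ∧
  (∀ I ∈ B, ∀ J ∈ B, (I ∩ J).Nonempty → I ∪ J ∈ B) ∧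
  (∀ i ∈ S, ({i} : Finset ℕ) ∈ B)

/-- `B` is a connected building set on `S`. -/
def IsConnBuildingSet (S : Finset ℕ) (B : Finset (Finset ℕ)) : Prop :=
  IsBuildingSet S B ∧ S ∈ B

/-- `T` is a `B`-tree: all descendant sets belong to `B`, and no union of
descendant sets of `k ≥ 2` pairwise incomparable nodes belongs to `B`. -/
def IsBTree (S : Finset ℕ) (B : Finset (Finset ℕ)) (T : RTree S) : Prop :=
  (∀ i ∈ S, T.desc i ∈ B) ∧
  ∀ I : Finset ℕ, I ⊆ S → 2 ≤ I.card →
    (∀ i ∈ I, ∀ j ∈ I, i ≠ j → i ∉ T.desc j ∧ j ∉ T.desc i) →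
    I.biUnion T.desc ∉ B


namespace RTree
variable {S : Finset ℕ}
theorem ext' {T T' : RTree S} (h1 : T.root = T'.root) (h2 : T.parent = T'.parent) : T = T' := by
  cases T; cases T'; simp_all

instance : Finite (RTree S) := by
  have : Function.Injective (fun T : RTree S =>
      ((⟨T.root, T.root_mem⟩ : {x // x ∈ S}),
        (fun x : {x // x ∈ S} => (⟨T.parent x, T.parent_mem x x.2⟩ : {x // x ∈ S})))) := by
    intro T T' h
    simp only [Prod.mk.injEq] at h
    refine ext' (by simpa using congrArg Subtype.val h.1) (funext fun x => ?_)
    by_cases hx : x ∈ S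
    · exact congrArg Subtype.val (congrFun h.2 ⟨x, hx⟩)
    · rw [T.parent_out x hx, T'.parent_out x hx]
  exact Finite.of_injective _ this
theorem iter_root (T : RTree S) (k : ℕ) : T.parent^[k] T.root = T.root :=
  Function.iterate_fixed T.parent_root k
theorem mem_desc_self (T : RTree S) {i : ℕ} (hi : i ∈ S) : i ∈ T.desc i :=
  Finset.mem_filter.2 ⟨hi, 0, rfl⟩
theorem desc_subset (T : RTree S) (i : ℕ) : T.desc i ⊆ S := Finset.filter_subset _ _
theorem desc_root (T : RTree S) : T.desc T.root = S := by
  apply Finset.Subset.antisymm (T.desc_subset _)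
  intro y hy
  exact Finset.mem_filter.2 ⟨hy, T.reach y hy⟩
theorem root_not_mem_desc (T : RTree S) {x : ℕ} (hx : x ≠ T.root) : T.root ∉ T.desc x := by
  intro h
  obtain ⟨-, k, hk⟩ := Finset.mem_filter.1 h
  exact hx (by rw [T.iter_root k] at hk; exact hk.symm)
theorem iter_mem (T : RTree S) {x : ℕ} (hx : x ∈ S) (k : ℕ) : T.parent^[k] x ∈ S := by
  induction k with
  | zero => exact hx
  | succ k ih => rw [Function.iterate_succ_apply']; exact T.parent_mem _ ih

end RTree

theorem exists_other {I : Finset ℕ} (h : 2 ≤ I.card) (a : ℕ) : ∃ y ∈ I, y ≠ a := by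
  obtain ⟨x, hx, y, hy, hxy⟩ := Finset.one_lt_card.1 h
  rcases eq_or_ne x a with h' | h'
  · exact ⟨y, hy, by rw [← h']; exact hxy.symm⟩
  · exact ⟨x, hx, h'⟩

section Sub
variable {Sc : Finset ℕ}

def subParent (T : RTree Sc) (Sj : Finset ℕ) (z : ℕ) : ℕ → ℕ :=
  fun x => if x ∈ Sj ∧ x ≠ z then T.parent x else x

theorem subParent_iter (T : RTree Sc) (Sj : Finset ℕ) (z : ℕ)
    (hcl : ∀ x ∈ Sj, x ≠ z → T.parent x ∈ Sj) :
    ∀ (k : ℕ) (y : ℕ), y ∈ Sj → (∀ m < k, T.parent^[m] y ≠ z) →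
      (subParent T Sj z)^[k] y = T.parent^[k] y := by
  intro k
  induction k with
  | zero => intro y _ _; rfl
  | succ k ih =>
    intro y hy hst
    have h0 : y ≠ z := hst 0 (Nat.succ_pos _)
    have h1 : subParent T Sj z y = T.parent y := if_pos ⟨hy, h0⟩
    rw [Function.iterate_succ_apply, Function.iterate_succ_apply, h1]
    exact ih _ (hcl y hy h0) fun m hm => by
      rw [← Function.iterate_succ_apply]; exact hst (m + 1) (Nat.succ_lt_succ hm)

def subtree (T : RTree Sc) (Sj : Finset ℕ) (z : ℕ) (hz : z ∈ Sj)
    (hcl : ∀ x ∈ Sj, x ≠ z → T.parent x ∈ Sj)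
    (hre : ∀ y ∈ Sj, ∃ k, T.parent^[k] y = z) : RTree Sj where
  root := z
  root_mem := hz
  parent := subParent T Sj z
  parent_out := fun i hi => if_neg fun h => hi h.1
  parent_root := if_neg fun h => h.2 rfl
  parent_mem := fun i hi => by
    by_cases h : i = z
    · rw [subParent, if_neg fun hh => hh.2 h]; exact hi
    · rw [subParent, if_pos ⟨hi, h⟩]; exact hcl i hi h
  reach := fun y hy => by
    have hex := hre y hy
    refine ⟨Nat.find hex, ?_⟩
    rw [subParent_iter T Sj z hcl _ y hy fun m hm => Nat.find_min hex hm]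
    exact Nat.find_spec hex

end Sub

theorem rank_sum {r : ℕ} (ρ : Fin r → ℕ) (hρ : Function.Injective ρ) :
    ∑ i : Fin r, (Polynomial.X : Polynomial ℤ) ^ (Finset.univ.filter fun j => ρ i < ρ j).card
      = ∑ k ∈ Finset.range r, (Polynomial.X : Polynomial ℤ) ^ k := by
  classical
  set c : Fin r → ℕ := fun i => (Finset.univ.filter fun j => ρ i < ρ j).card with hc
  have hlt : ∀ i, c i < r := by
    intro i
    have hss : (Finset.univ.filter fun j => ρ i < ρ j) ⊂ Finset.univ := by
      rw [Finset.ssubset_univ_iff]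
      intro h
      have h2 : i ∈ Finset.univ.filter fun j => ρ i < ρ j := by rw [h]; exact Finset.mem_univ i
      simp at h2
    have := Finset.card_lt_card hss
    simpa using this
  have hkey : ∀ a b, ρ a < ρ b → c b < c a := by
    intro a b hab
    apply Finset.card_lt_card
    constructor
    · intro j hj
      rw [Finset.mem_filter] at hj ⊢
      exact ⟨Finset.mem_univ _, lt_trans hab hj.2⟩
    · intro hsub
      have h1 : b ∈ Finset.univ.filter fun j => ρ a < ρ j := by
        rw [Finset.mem_filter]; exact ⟨Finset.mem_univ _, hab⟩
      have := hsub h1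
      rw [Finset.mem_filter] at this
      exact lt_irrefl _ this.2
  have hinj : Function.Injective fun i => (⟨c i, hlt i⟩ : Fin r) := by
    intro a b hab
    simp only [Fin.mk.injEq] at hab
    by_contra hne
    rcases lt_trichotomy (ρ a) (ρ b) with h | h | h
    · have := hkey a b h; omega
    · exact hne (hρ h)
    · have := hkey b a h; omega
  have hbij := Finite.injective_iff_bijective.1 hinj
  calc ∑ i : Fin r, (Polynomial.X : Polynomial ℤ) ^ (c i)
      = ∑ i : Fin r, (fun k : Fin r => (Polynomial.X : Polynomial ℤ) ^ (k : ℕ))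
          ((fun i => (⟨c i, hlt i⟩ : Fin r)) i) := rfl
    _ = ∑ k : Fin r, (Polynomial.X : Polynomial ℤ) ^ (k : ℕ) :=
        Function.Bijective.sum_comp hbij (fun k : Fin r => (Polynomial.X : Polynomial ℤ) ^ (k : ℕ))
    _ = ∑ k ∈ Finset.range r, (Polynomial.X : Polynomial ℤ) ^ k :=
        Fin.sum_univ_eq_sum_range _ r

section Combine
variable {r : ℕ} {S : Fin r → Finset ℕ}

theorem idx_unique (hdisj : ∀ i j, i ≠ j → Disjoint (S i) (S j)) {x : ℕ} {j j' : Fin r}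
    (h : x ∈ S j) (h' : x ∈ S j') : j = j' := by
  by_contra hne
  exact Finset.disjoint_left.1 (hdisj j j' hne) h h'

def glue (p : ∀ j, RTree (S j)) (i₀ : Fin r) : ℕ → ℕ := fun x =>
  if h : ∃ j, x ∈ S j then
    (if x = (p h.choose).root ∧ h.choose ≠ i₀ then (p i₀).root else (p h.choose).parent x)
  else x

variable (hdisj : ∀ i j, i ≠ j → Disjoint (S i) (S j)) (p : ∀ j, RTree (S j)) (i₀ : Fin r)

include hdisj

theorem glue_eq {x : ℕ} {j : Fin r} (hx : x ∈ S j) :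
    glue p i₀ x = if x = (p j).root ∧ j ≠ i₀ then (p i₀).root else (p j).parent x := by
  have h : ∃ j, x ∈ S j := ⟨j, hx⟩
  have hj : h.choose = j := idx_unique hdisj h.choose_spec hx
  rw [glue, dif_pos h, hj]

theorem glue_i0 {x : ℕ} (hx : x ∈ S i₀) : glue p i₀ x = (p i₀).parent x := by
  rw [glue_eq hdisj p i₀ hx, if_neg (by simp)]

theorem glue_ne_root {x : ℕ} {j : Fin r} (hx : x ∈ S j) (hne : x ≠ (p j).root) :
    glue p i₀ x = (p j).parent x := by
  rw [glue_eq hdisj p i₀ hx, if_neg (by simp [hne])]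

theorem glue_root {j : Fin r} (hj : j ≠ i₀) : glue p i₀ ((p j).root) = (p i₀).root := by
  rw [glue_eq hdisj p i₀ (p j).root_mem, if_pos ⟨rfl, hj⟩]

omit hdisj in
theorem glue_out {x : ℕ} (h : ¬ ∃ j, x ∈ S j) : glue p i₀ x = x := dif_neg h

theorem glue_fix_root (k : ℕ) : (glue p i₀)^[k] ((p i₀).root) = (p i₀).root :=
  Function.iterate_fixed (by rw [glue_i0 hdisj p i₀ (p i₀).root_mem, (p i₀).parent_root]) k

theorem glue_iter_i0 : ∀ (k : ℕ) (x : ℕ), x ∈ S i₀ →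
    (glue p i₀)^[k] x = (p i₀).parent^[k] x := by
  intro k
  induction k with
  | zero => intro x _; rfl
  | succ k ih =>
    intro x hx
    rw [Function.iterate_succ_apply, Function.iterate_succ_apply,
      glue_i0 hdisj p i₀ hx]
    exact ih _ ((p i₀).parent_mem x hx)

theorem glue_iter_of_ne {j : Fin r} : ∀ (k : ℕ) (x : ℕ), x ∈ S j →
    (∀ m < k, (p j).parent^[m] x ≠ (p j).root) →
    (glue p i₀)^[k] x = (p j).parent^[k] x := by
  intro k
  induction k with
  | zero => intro x _ _; rfl
  | succ k ih =>
    intro x hx hst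
    rw [Function.iterate_succ_apply, Function.iterate_succ_apply,
      glue_ne_root hdisj p i₀ hx (hst 0 (Nat.succ_pos _))]
    exact ih _ ((p j).parent_mem x hx) fun m hm => by
      rw [← Function.iterate_succ_apply]; exact hst (m + 1) (Nat.succ_lt_succ hm)

theorem glue_iter_of_ne' {j : Fin r} : ∀ (k : ℕ) (x : ℕ), x ∈ S j →
    (∀ m < k, (glue p i₀)^[m] x ≠ (p j).root) →
    (glue p i₀)^[k] x = (p j).parent^[k] x := by
  intro k
  induction k with
  | zero => intro x _ _; rfl
  | succ k ih =>
    intro x hx hst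
    rw [Function.iterate_succ_apply, Function.iterate_succ_apply,
      glue_ne_root hdisj p i₀ hx (hst 0 (Nat.succ_pos _))]
    refine ih _ ((p j).parent_mem x hx) fun m hm => ?_
    have := hst (m + 1) (Nat.succ_lt_succ hm)
    rwa [Function.iterate_succ_apply, glue_ne_root hdisj p i₀ hx (hst 0 (Nat.succ_pos _))] at this

theorem glue_iter_mem {j : Fin r} : ∀ (k : ℕ) (x : ℕ), x ∈ S j →
    (glue p i₀)^[k] x ∈ S j ∨ (glue p i₀)^[k] x = (p i₀).root := by
  intro k
  induction k with
  | zero => intro x hx; exact Or.inl hx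
  | succ k ih =>
    intro x hx
    rw [Function.iterate_succ_apply]
    by_cases hj : j = i₀
    · subst hj
      rw [glue_i0 hdisj p j hx]
      exact ih _ ((p j).parent_mem x hx)
    · rcases eq_or_ne x ((p j).root) with hr | hr
      · rw [hr, glue_root hdisj p i₀ hj, glue_fix_root hdisj p i₀]
        exact Or.inr rfl
      · rw [glue_ne_root hdisj p i₀ hx hr]
        exact ih _ ((p j).parent_mem x hx)

theorem glue_reach_own {x : ℕ} {j : Fin r} (hx : x ∈ S j) :
    ∃ k, (glue p i₀)^[k] x = (p j).root := by
  obtain ⟨k, hk⟩ := (p j).reach x hx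
  have hex : ∃ k, (p j).parent^[k] x = (p j).root := ⟨k, hk⟩
  refine ⟨Nat.find hex, ?_⟩
  rw [glue_iter_of_ne hdisj p i₀ _ x hx fun m hm => Nat.find_min hex hm]
  exact Nat.find_spec hex

theorem glue_fix_root_iterfix : Function.IsFixedPt (glue p i₀) ((p i₀).root) := by
  rw [Function.IsFixedPt, glue_i0 hdisj p i₀ (p i₀).root_mem, (p i₀).parent_root]

def assemble : RTree (Finset.univ.biUnion S) where
  root := (p i₀).root
  root_mem := Finset.mem_biUnion.2 ⟨i₀, Finset.mem_univ _, (p i₀).root_mem⟩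
  parent := glue p i₀
  parent_out := fun x hx => glue_out p i₀ (by simpa using hx)
  parent_root := by rw [glue_i0 hdisj p i₀ (p i₀).root_mem, (p i₀).parent_root]
  parent_mem := by
    intro x hx
    obtain ⟨j, -, hj⟩ := Finset.mem_biUnion.1 hx
    rw [glue_eq hdisj p i₀ hj]
    split
    · exact Finset.mem_biUnion.2 ⟨i₀, Finset.mem_univ _, (p i₀).root_mem⟩
    · exact Finset.mem_biUnion.2 ⟨j, Finset.mem_univ _, (p j).parent_mem x hj⟩
  reach := by
    intro x hx
    obtain ⟨j, -, hj⟩ := Finset.mem_biUnion.1 hx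
    obtain ⟨k, hk⟩ := glue_reach_own hdisj p i₀ hj
    by_cases h : j = i₀
    · exact ⟨k, by rw [hk, h]⟩
    · exact ⟨k + 1, by rw [Function.iterate_succ_apply', hk, glue_root hdisj p i₀ h]⟩

theorem assemble_root : (assemble hdisj p i₀).root = (p i₀).root := rfl
theorem assemble_parent : (assemble hdisj p i₀).parent = glue p i₀ := rfl

theorem desc_assemble_root :
    (assemble hdisj p i₀).desc ((p i₀).root) = Finset.univ.biUnion S :=
  (assemble hdisj p i₀).desc_root

theorem desc_assemble_rootj {j : Fin r} (hj : j ≠ i₀) :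
    (assemble hdisj p i₀).desc ((p j).root) = S j := by
  ext y
  rw [RTree.desc, Finset.mem_filter, assemble_parent]
  constructor
  · rintro ⟨hy, k, hk⟩
    obtain ⟨l, -, hl⟩ := Finset.mem_biUnion.1 hy
    rcases glue_iter_mem hdisj p i₀ k y hl with h | h
    · rw [hk] at h
      have hlj : l = j := idx_unique hdisj h (p j).root_mem
      exact hlj ▸ hl
    · rw [hk] at h
      exact absurd (idx_unique hdisj (h ▸ (p j).root_mem) (p i₀).root_mem) hj
  · intro hy
    exact ⟨Finset.mem_biUnion.2 ⟨j, Finset.mem_univ _, hy⟩, glue_reach_own hdisj p i₀ hy⟩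

theorem desc_assemble_eq {x : ℕ} {j : Fin r} (hx : x ∈ S j) (hne : x ≠ (p j).root) :
    (assemble hdisj p i₀).desc x = (p j).desc x := by
  have hxi : x ≠ (p i₀).root := by
    intro h
    by_cases hj : j = i₀
    · exact hne (by rw [h, hj])
    · exact hj (idx_unique hdisj hx (h ▸ (p i₀).root_mem))
  ext y
  rw [RTree.desc, Finset.mem_filter, assemble_parent, RTree.desc, Finset.mem_filter]
  constructor
  · rintro ⟨hy, k, hk⟩
    obtain ⟨l, -, hl⟩ := Finset.mem_biUnion.1 hy
    have hlj : l = j := by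
      rcases glue_iter_mem hdisj p i₀ k y hl with h | h
      · rw [hk] at h; exact idx_unique hdisj h hx
      · rw [hk] at h; exact absurd h hxi
    subst hlj
    by_cases hj : l = i₀
    · subst hj
      rw [glue_iter_i0 hdisj p l k y hl] at hk
      exact ⟨hl, k, hk⟩
    · have hex : ∃ k, (glue p i₀)^[k] y = x := ⟨k, hk⟩
      set K := Nat.find hex with hK
      have hspec : (glue p i₀)^[K] y = x := Nat.find_spec hex
      have hstay : ∀ m < K, (glue p i₀)^[m] y ≠ (p l).root := by
        intro m hm hroot
        have h1 : (glue p i₀)^[m + 1] y = (p i₀).root := by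
          rw [Function.iterate_succ_apply', hroot, glue_root hdisj p i₀ hj]
        have h2 : (glue p i₀)^[K] y = (p i₀).root := by
          have : K = (K - (m + 1)) + (m + 1) := (Nat.sub_add_cancel hm).symm
          rw [this, Function.iterate_add_apply, h1, glue_fix_root hdisj]
        exact hxi (by rw [← hspec, h2])
      rw [glue_iter_of_ne' hdisj p i₀ K y hl hstay] at hspec
      exact ⟨hl, K, hspec⟩
  · rintro ⟨hy, k, hk⟩
    refine ⟨Finset.mem_biUnion.2 ⟨j, Finset.mem_univ _, hy⟩, ?_⟩
    have hex : ∃ k, (p j).parent^[k] y = x := ⟨k, hk⟩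
    set K := Nat.find hex with hK
    have hspec : (p j).parent^[K] y = x := Nat.find_spec hex
    have hstay : ∀ m < K, (p j).parent^[m] y ≠ (p j).root := by
      intro m hm hroot
      apply hne
      rw [← hspec]
      have : K = (K - m) + m := (Nat.sub_add_cancel hm.le).symm
      rw [this, Function.iterate_add_apply, hroot, (p j).iter_root]
    exact ⟨K, by rw [glue_iter_of_ne hdisj p i₀ K y hy hstay]; exact hspec⟩

theorem des_assemble :
    (assemble hdisj p i₀).des
      = (Finset.univ.filter fun j => (p i₀).root < (p j).root).card + ∑ j, (p j).des := by
  classical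
  have hroot_ne : ∀ {j : Fin r} {x : ℕ}, x ∈ S j → j ≠ i₀ → x ≠ (p i₀).root := by
    intro j x hx hj h
    exact hj (idx_unique hdisj hx (h ▸ (p i₀).root_mem))
  have hP : (assemble hdisj p i₀).desSet
      = (Finset.univ.biUnion S).filter (fun x => x ≠ (p i₀).root ∧ glue p i₀ x < x) := rfl
  have hsplit : (assemble hdisj p i₀).desSet
      = Finset.univ.biUnion (fun j => (S j).filter fun x =>
          x ≠ (p i₀).root ∧ glue p i₀ x < x) := by
    rw [hP, Finset.filter_biUnion]
  have hdisj' : ∀ x ∈ (Finset.univ : Finset (Fin r)), ∀ y ∈ Finset.univ, x ≠ y →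
      Disjoint ((S x).filter fun a => a ≠ (p i₀).root ∧ glue p i₀ a < a)
        ((S y).filter fun a => a ≠ (p i₀).root ∧ glue p i₀ a < a) := by
    intro x _ y _ hxy
    exact Finset.disjoint_filter_filter (hdisj x y hxy)
  rw [RTree.des, hsplit, Finset.card_biUnion hdisj']
  have key : ∀ j : Fin r, ((S j).filter fun x => x ≠ (p i₀).root ∧ glue p i₀ x < x).card
      = (if (p i₀).root < (p j).root ∧ j ≠ i₀ then 1 else 0) + (p j).des := by
    intro j
    by_cases hj : j = i₀
    · subst hj
      have : ((S j).filter fun x => x ≠ (p j).root ∧ glue p j x < x) = (p j).desSet := by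
        apply Finset.filter_congr
        intro x hx
        rw [glue_i0 hdisj p j hx]
      rw [this, if_neg (by simp), RTree.des, zero_add]
    · have heq : ((S j).filter fun x => x ≠ (p i₀).root ∧ glue p i₀ x < x)
          = (if (p i₀).root < (p j).root then {(p j).root} else ∅) ∪ (p j).desSet := by
        ext x
        simp only [Finset.mem_filter, Finset.mem_union, RTree.desSet]
        constructor
        · rintro ⟨hx, hne, hlt⟩
          by_cases hxr : x = (p j).root
          · subst hxr
            rw [glue_root hdisj p i₀ hj] at hlt
            left; rw [if_pos hlt]; exact Finset.mem_singleton_self _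
          · right
            rw [glue_ne_root hdisj p i₀ hx hxr] at hlt
            exact ⟨hx, hxr, hlt⟩
        · rintro (h | h)
          · rcases lt_or_ge ((p i₀).root) ((p j).root) with hlt | hle
            · rw [if_pos hlt] at h
              rw [Finset.mem_singleton] at h
              subst h
              exact ⟨(p j).root_mem, hroot_ne (p j).root_mem hj,
                by rw [glue_root hdisj p i₀ hj]; exact hlt⟩
            · rw [if_neg (not_lt.2 hle)] at h
              exact absurd h (Finset.notMem_empty _)
          · obtain ⟨hx, hxr, hlt⟩ := h
            exact ⟨hx, hroot_ne hx hj, by rwa [glue_ne_root hdisj p i₀ hx hxr]⟩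
      rw [heq, Finset.card_union_of_disjoint, RTree.des]
      · rcases lt_or_ge ((p i₀).root) ((p j).root) with hlt | hle
        · rw [if_pos hlt, if_pos ⟨hlt, hj⟩, Finset.card_singleton]
        · rw [if_neg (not_lt.2 hle), if_neg (fun h => (not_lt.2 hle) h.1), Finset.card_empty]
      · intro t ht1 ht2
        rcases lt_or_ge ((p i₀).root) ((p j).root) with hlt | hle
        · rw [if_pos hlt] at ht1
          intro a ha
          have := ht1 ha
          rw [Finset.mem_singleton] at this
          subst this
          have := ht2 ha
          rw [RTree.desSet, Finset.mem_filter] at this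
          exact absurd rfl this.2.1
        · rw [if_neg (not_lt.2 hle)] at ht1
          intro a ha
          exact absurd (ht1 ha) (Finset.notMem_empty _)
  calc ∑ j, ((S j).filter fun x => x ≠ (p i₀).root ∧ glue p i₀ x < x).card
      = ∑ j, ((if (p i₀).root < (p j).root ∧ j ≠ i₀ then 1 else 0) + (p j).des) := by
        exact Finset.sum_congr rfl fun j _ => key j
    _ = (∑ j, if (p i₀).root < (p j).root ∧ j ≠ i₀ then 1 else 0) + ∑ j, (p j).des := by
        rw [Finset.sum_add_distrib]
    _ = (Finset.univ.filter fun j => (p i₀).root < (p j).root).card + ∑ j, (p j).des := by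
        congr 1
        rw [Finset.card_filter]
        apply Finset.sum_congr rfl
        intro j _
        by_cases hj : j = i₀
        · subst hj; simp
        · simp [hj]

variable {B : Fin r → Finset (Finset ℕ)}

theorem isBTree_assemble (hB : ∀ i, IsConnBuildingSet (S i) (B i))
    (hp : ∀ j, IsBTree (S j) (B j) (p j)) :
    IsBTree (Finset.univ.biUnion S) (Finset.univ.biUnion B ∪ {Finset.univ.biUnion S})
      (assemble hdisj p i₀) := by
  classical
  constructor
  · intro x hx
    obtain ⟨j, -, hj⟩ := Finset.mem_biUnion.1 hx
    by_cases hxr : x = (p j).root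
    · by_cases hji : j = i₀
      · subst hji; subst hxr
        rw [desc_assemble_root hdisj p j]
        exact Finset.mem_union_right _ (Finset.mem_singleton_self _)
      · subst hxr
        rw [desc_assemble_rootj hdisj p i₀ hji]
        exact Finset.mem_union_left _
          (Finset.mem_biUnion.2 ⟨j, Finset.mem_univ _, (hB j).2⟩)
    · rw [desc_assemble_eq hdisj p i₀ hj hxr]
      exact Finset.mem_union_left _
        (Finset.mem_biUnion.2 ⟨j, Finset.mem_univ _, (hp j).1 x hj⟩)
  · intro I hI hcard hinc hmem
    -- root p i₀ is not in I
    have hrI : (p i₀).root ∉ I := by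
      intro hr
      obtain ⟨y, hy, hyne⟩ : ∃ y ∈ I, y ≠ (p i₀).root := by
        obtain ⟨a, ha, b, hb, hab⟩ := Finset.one_lt_card.1 hcard
        rcases eq_or_ne a ((p i₀).root) with h | h
        · exact ⟨b, hb, by rw [← h]; exact hab.symm⟩
        · exact ⟨a, ha, h⟩
      have := (hinc y hy ((p i₀).root) hr hyne).1
      apply this
      rw [← assemble_root hdisj p i₀, (assemble hdisj p i₀).desc_root]
      exact hI hy
    -- each element's descendant set avoids the global root
    have hdesc_noroot : ∀ x ∈ I, (p i₀).root ∉ (assemble hdisj p i₀).desc x := by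
      intro x hxI
      have hxne : x ≠ (p i₀).root := fun h => hrI (h ▸ hxI)
      rw [← assemble_root hdisj p i₀] at hxne ⊢
      exact (assemble hdisj p i₀).root_not_mem_desc hxne
    rcases Finset.mem_union.1 hmem with hmem | hmem
    · -- in some B k
      obtain ⟨k, -, hk⟩ := Finset.mem_biUnion.1 hmem
      have hsub : I.biUnion (assemble hdisj p i₀).desc ⊆ S k := ((hB k).1.1 _ hk).1
      have hIk : ∀ x ∈ I, x ∈ S k := by
        intro x hxI
        apply hsub
        refine Finset.mem_biUnion.2 ⟨x, hxI, ?_⟩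
        exact (assemble hdisj p i₀).mem_desc_self (hI hxI)
      have hxr : ∀ x ∈ I, x ≠ (p k).root := by
        intro x hxI hx
        by_cases hki : k = i₀
        · exact hrI (by rw [hki] at hx; exact hx ▸ hxI)
        · obtain ⟨y, hy, hyne⟩ : ∃ y ∈ I, y ≠ x := by
            obtain ⟨a, ha, b, hb, hab⟩ := Finset.one_lt_card.1 hcard
            rcases eq_or_ne a x with h | h
            · exact ⟨b, hb, by rw [← h]; exact hab.symm⟩
            · exact ⟨a, ha, h⟩
          apply (hinc y hy x hxI hyne).1
          rw [hx, desc_assemble_rootj hdisj p i₀ hki]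
          exact hIk y hy
      have hdesc_eq : ∀ x ∈ I, (assemble hdisj p i₀).desc x = (p k).desc x := by
        intro x hxI
        exact desc_assemble_eq hdisj p i₀ (hIk x hxI) (hxr x hxI)
      have : I.biUnion (assemble hdisj p i₀).desc = I.biUnion (p k).desc :=
        Finset.biUnion_congr rfl hdesc_eq
      rw [this] at hk
      refine (hp k).2 I (fun x hx => hIk x hx) hcard ?_ hk
      intro a ha b hb hab
      have h1 := (hinc a ha b hb hab).1
      have h2 := (hinc a ha b hb hab).2
      rw [hdesc_eq b hb] at h1
      rw [hdesc_eq a ha] at h2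
      exact ⟨h1, h2⟩
    · -- equals the whole ground set: impossible
      rw [Finset.mem_singleton] at hmem
      have : (p i₀).root ∈ I.biUnion (assemble hdisj p i₀).desc := by
        rw [hmem]
        exact Finset.mem_biUnion.2 ⟨i₀, Finset.mem_univ _, (p i₀).root_mem⟩
      obtain ⟨x, hxI, hx⟩ := Finset.mem_biUnion.1 this
      exact hdesc_noroot x hxI hx


theorem assemble_inj {p p' : ∀ j, RTree (S j)} {i₀ i₀' : Fin r}
    (h : assemble hdisj p i₀ = assemble hdisj p' i₀') : i₀ = i₀' ∧ p = p' := by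
  have hroot : (p i₀).root = (p' i₀').root := congrArg RTree.root h
  have hparent : glue p i₀ = glue p' i₀' := congrArg RTree.parent h
  have hi : i₀ = i₀' := idx_unique hdisj ((p i₀).root_mem) (hroot ▸ (p' i₀').root_mem)
  subst hi
  refine ⟨rfl, funext fun j => ?_⟩
  have hrj : (p j).root = (p' j).root := by
    by_cases hj : j = i₀
    · subst hj; exact hroot
    · by_contra hne
      have h1 : glue p i₀ ((p j).root) = (p i₀).root := glue_root hdisj p i₀ hj
      have h2 : glue p' i₀ ((p j).root) = (p' j).parent ((p j).root) :=
        glue_ne_root hdisj p' i₀ ((p j).root_mem) hne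
      have h3 : (p' j).parent ((p j).root) ∈ S j := (p' j).parent_mem _ (p j).root_mem
      rw [hparent, h2] at h1
      exact hj (idx_unique hdisj (h1 ▸ h3) ((p i₀).root_mem))
  refine RTree.ext' hrj (funext fun x => ?_)
  by_cases hx : x ∈ S j
  · by_cases hxr : x = (p j).root
    · rw [hxr, (p j).parent_root, hrj, (p' j).parent_root]
    · have e1 : glue p i₀ x = (p j).parent x := glue_ne_root hdisj p i₀ hx hxr
      have e2 : glue p' i₀ x = (p' j).parent x := glue_ne_root hdisj p' i₀ hx (hrj ▸ hxr)
      rw [← e1, ← e2, hparent]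
  · rw [(p j).parent_out x hx, (p' j).parent_out x hx]

omit p i₀ in
theorem assemble_surj (hB : ∀ i, IsConnBuildingSet (S i) (B i))
    (T : RTree (Finset.univ.biUnion S))
    (hT : IsBTree (Finset.univ.biUnion S)
      (Finset.univ.biUnion B ∪ {Finset.univ.biUnion S}) T) :
    ∃ (a : Fin r) (q : ∀ j, RTree (S j)), (∀ j, IsBTree (S j) (B j) (q j)) ∧
      assemble hdisj q a = T := by
  classical
  have hρ : T.root ∈ Finset.univ.biUnion S := T.root_mem
  obtain ⟨i₀, -, hρi⟩ := Finset.mem_biUnion.1 hρ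
  have hmemSc : ∀ {x : ℕ} {j : Fin r}, x ∈ S j → x ∈ Finset.univ.biUnion S :=
    fun {x j} hx => Finset.mem_biUnion.2 ⟨j, Finset.mem_univ _, hx⟩
  have F1 : ∀ {x : ℕ} {j : Fin r}, x ∈ S j → x ≠ T.root → T.desc x ⊆ S j := by
    intro x j hx hne
    have h1 := hT.1 x (hmemSc hx)
    rcases Finset.mem_union.1 h1 with h | h
    · obtain ⟨k, -, hk⟩ := Finset.mem_biUnion.1 h
      have hsub := ((hB k).1.1 _ hk).1
      have hxk : x ∈ S k := hsub (T.mem_desc_self (hmemSc hx))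
      rw [idx_unique hdisj hx hxk]
      exact hsub
    · rw [Finset.mem_singleton] at h
      exact absurd (h.symm ▸ T.root_mem) (T.root_not_mem_desc hne)
  have F2 : ∀ {x : ℕ} {j : Fin r}, x ∈ S j → x ≠ T.root → T.parent x ≠ T.root →
      T.parent x ∈ S j := by
    intro x j hx hne hpne
    have hpx : T.parent x ∈ Finset.univ.biUnion S := T.parent_mem x (hmemSc hx)
    obtain ⟨j', -, hj'⟩ := Finset.mem_biUnion.1 hpx
    have hxd : x ∈ T.desc (T.parent x) := Finset.mem_filter.2 ⟨hmemSc hx, 1, rfl⟩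
    have hxj' : x ∈ S j' := F1 hj' hpne hxd
    rwa [idx_unique hdisj hj' (idx_unique hdisj hxj' hx ▸ hj')] at hj'
  have F3 : ∀ j : Fin r, ∃ z, z ∈ S j ∧
      (∀ x ∈ S j, x ≠ z → T.parent x ∈ S j) ∧
      (∀ y ∈ S j, ∃ k, T.parent^[k] y = z) ∧
      (j = i₀ → z = T.root) ∧ (j ≠ i₀ → T.parent z = T.root) := by
    intro j
    by_cases hj : j = i₀
    · subst hj
      refine ⟨T.root, hρi, ?_, ?_, fun _ => rfl, fun h => absurd rfl h⟩
      · intro x hx hne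
        by_cases hp : T.parent x = T.root
        · rw [hp]; exact hρi
        · exact F2 hx hne hp
      · intro y hy
        exact T.reach y (hmemSc hy)
    · have hρj : T.root ∉ S j := fun h => hj (idx_unique hdisj h hρi)
      have stepa : ∀ y ∈ S j, ∃ z, z ∈ S j ∧ T.parent z = T.root ∧ y ∈ T.desc z := by
        intro y hy
        have hex : ∃ k, T.parent^[k] y = T.root := T.reach y (hmemSc hy)
        have hspec := Nat.find_spec hex
        have hKpos : 0 < Nat.find hex := by
          rcases Nat.eq_zero_or_pos (Nat.find hex) with h | h
          · exfalso; rw [h] at hspec; exact hρj (hspec ▸ hy)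
          · exact h
        have hmem : ∀ m < Nat.find hex, T.parent^[m] y ∈ S j := by
          intro m
          induction m with
          | zero => intro _; exact hy
          | succ m ih =>
            intro hm
            have h1 : m < Nat.find hex := Nat.lt_of_succ_lt hm
            have h2 := ih h1
            have hne : T.parent^[m] y ≠ T.root := fun h => hρj (h ▸ h2)
            have hpne : T.parent (T.parent^[m] y) ≠ T.root := by
              have hiter : T.parent^[m + 1] y = T.parent (T.parent^[m] y) :=
                Function.iterate_succ_apply' T.parent m y
              rw [← hiter]
              exact Nat.find_min hex hm
            rw [Function.iterate_succ_apply']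
            exact F2 h2 hne hpne
        refine ⟨T.parent^[Nat.find hex - 1] y, hmem _ (Nat.sub_lt hKpos one_pos), ?_, ?_⟩
        · have hiter : T.parent^[(Nat.find hex - 1) + 1] y
              = T.parent (T.parent^[Nat.find hex - 1] y) :=
            Function.iterate_succ_apply' T.parent _ y
          rw [← hiter, Nat.sub_add_cancel hKpos]
          exact hspec
        · exact Finset.mem_filter.2 ⟨hmemSc hy, Nat.find hex - 1, rfl⟩
      have hSjne : (S j).Nonempty := ((hB j).1.1 _ (hB j).2).2
      obtain ⟨y₀, hy₀⟩ := hSjne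
      obtain ⟨z₀, hz₀, hz₀p, -⟩ := stepa y₀ hy₀
      have hz₀C : z₀ ∈ (S j).filter fun z => T.parent z = T.root :=
        Finset.mem_filter.2 ⟨hz₀, hz₀p⟩
      have hbiU : ((S j).filter fun z => T.parent z = T.root).biUnion T.desc = S j := by
        apply Finset.Subset.antisymm
        · intro y hy
          obtain ⟨z, hz, hyz⟩ := Finset.mem_biUnion.1 hy
          obtain ⟨hz1, -⟩ := Finset.mem_filter.1 hz
          exact F1 hz1 (fun h => hρj (h ▸ hz1)) hyz
        · intro y hy
          obtain ⟨z, hz1, hz2, hz3⟩ := stepa y hy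
          exact Finset.mem_biUnion.2 ⟨z, Finset.mem_filter.2 ⟨hz1, hz2⟩, hz3⟩
      have hCcard : ((S j).filter fun z => T.parent z = T.root).card = 1 := by
        by_contra hc
        have h2 : 2 ≤ ((S j).filter fun z => T.parent z = T.root).card := by
          have := Finset.card_pos.2 ⟨z₀, hz₀C⟩; omega
        have key : ∀ a ∈ (S j).filter fun z => T.parent z = T.root,
            ∀ b ∈ (S j).filter fun z => T.parent z = T.root, a ≠ b → a ∉ T.desc b := by
          intro a ha b hb hab h
          obtain ⟨-, k, hk⟩ := Finset.mem_filter.1 h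
          have hk0 : k ≠ 0 := by intro h0; rw [h0] at hk; exact hab hk
          have hkk : T.parent^[k] a = T.root := by
            have he : k = (k - 1) + 1 := (Nat.succ_pred_eq_of_pos (Nat.pos_of_ne_zero hk0)).symm
            rw [he, Function.iterate_succ_apply, (Finset.mem_filter.1 ha).2]
            exact T.iter_root _
          rw [hk] at hkk
          exact hρj (hkk ▸ (Finset.mem_filter.1 hb).1)
        have hinc : ∀ a ∈ (S j).filter fun z => T.parent z = T.root,
            ∀ b ∈ (S j).filter fun z => T.parent z = T.root,
            a ≠ b → a ∉ T.desc b ∧ b ∉ T.desc a :=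
          fun a ha b hb hab => ⟨key a ha b hb hab, key b hb a ha hab.symm⟩
        have := hT.2 _ (fun x hx => hmemSc (Finset.mem_filter.1 hx).1) h2 hinc
        rw [hbiU] at this
        exact this (Finset.mem_union_left _
          (Finset.mem_biUnion.2 ⟨j, Finset.mem_univ _, (hB j).2⟩))
      obtain ⟨z, hzC⟩ := Finset.card_eq_one.1 hCcard
      have hzz₀ : z₀ = z := by rw [hzC] at hz₀C; exact Finset.mem_singleton.1 hz₀C
      subst hzz₀
      have hdz : T.desc z₀ = S j := by rw [← hbiU, hzC, Finset.singleton_biUnion]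
      refine ⟨z₀, hz₀, ?_, ?_, fun h => absurd h hj, fun _ => hz₀p⟩
      · intro x hx hne
        have hxρ : x ≠ T.root := fun h => hρj (h ▸ hx)
        by_cases hp : T.parent x = T.root
        · exfalso
          apply hne
          have : x ∈ (S j).filter fun z => T.parent z = T.root := Finset.mem_filter.2 ⟨hx, hp⟩
          rw [hzC] at this
          exact Finset.mem_singleton.1 this
        · exact F2 hx hxρ hp
      · intro y hy
        have : y ∈ T.desc z₀ := hdz ▸ hy
        exact (Finset.mem_filter.1 this).2
  choose z hz1 hz2 hz3 hz4 hz5 using F3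
  set q : ∀ j, RTree (S j) := fun j => subtree T (S j) (z j) (hz1 j) (hz2 j) (hz3 j) with hq
  have hqroot : ∀ j, (q j).root = z j := fun j => rfl
  have heq : assemble hdisj q i₀ = T := by
    refine RTree.ext' ?_ (funext fun x => ?_)
    · exact hz4 i₀ rfl
    · show glue q i₀ x = T.parent x
      by_cases hx : ∃ j, x ∈ S j
      · obtain ⟨j, hxj⟩ := hx
        rw [glue_eq hdisj q i₀ hxj]
        by_cases hxz : x = z j
        · by_cases hj : j = i₀
          · rw [if_neg (by simp [hj])]
            have h1 : (q j).parent x = x := if_neg fun h => h.2 hxz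
            rw [h1, hxz, hz4 j hj]
            exact T.parent_root.symm
          · rw [if_pos ⟨hxz, hj⟩]
            have h2 : T.parent x = T.root := by rw [hxz]; exact hz5 j hj
            rw [h2]
            exact hz4 i₀ rfl
        · rw [if_neg fun h => hxz h.1]
          exact if_pos ⟨hxj, hxz⟩
      · rw [glue_out q i₀ hx]
        exact (T.parent_out x (by simpa using hx)).symm
  have hdesc_eqT : ∀ (j : Fin r), ∀ x ∈ S j, x ≠ z j → (q j).desc x = T.desc x := by
    intro j x hx hne
    rw [← heq]
    exact (desc_assemble_eq hdisj q i₀ hx hne).symm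
  have hdesc_root : ∀ j, (q j).desc (z j) = S j := fun j => (q j).desc_root
  refine ⟨i₀, q, fun j => ⟨?_, ?_⟩, heq⟩
  · intro x hx
    by_cases hxz : x = z j
    · rw [hxz, hdesc_root j]; exact (hB j).2
    · rw [hdesc_eqT j x hx hxz]
      have h1 := hT.1 x (hmemSc hx)
      rcases Finset.mem_union.1 h1 with h | h
      · obtain ⟨k, -, hk⟩ := Finset.mem_biUnion.1 h
        have hsub : T.desc x ⊆ S k := ((hB k).1.1 _ hk).1
        have hxk : x ∈ S k := hsub (T.mem_desc_self (hmemSc hx))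
        rwa [idx_unique hdisj hxk hx] at hk
      · exfalso
        rw [Finset.mem_singleton] at h
        have hxρ : x ≠ T.root := by
          intro hh
          apply hxz
          have hji : j = i₀ := idx_unique hdisj (hh ▸ hx) hρi
          rw [hji, hz4 i₀ rfl]
          exact hh
        exact (T.root_not_mem_desc hxρ) (h.symm ▸ T.root_mem)
  · intro I hI hcard hinc hmemBj
    have hzI : z j ∉ I := by
      intro hzj
      obtain ⟨y, hy, hyne⟩ := exists_other hcard (z j)
      exact (hinc y hy (z j) hzj hyne).1 (by rw [hdesc_root j]; exact hI hy)
    have hneq : ∀ x ∈ I, x ≠ z j := fun x hx h => hzI (h ▸ hx)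
    have hdeq : ∀ x ∈ I, (q j).desc x = T.desc x :=
      fun x hx => hdesc_eqT j x (hI hx) (hneq x hx)
    have hbi : I.biUnion (q j).desc = I.biUnion T.desc := Finset.biUnion_congr rfl hdeq
    have hTI := hT.2 I (fun x hx => hmemSc (hI hx)) hcard (fun a ha b hb hab => by
      have h := hinc a ha b hb hab
      rw [hdeq b hb, hdeq a ha] at h
      exact h)
    rw [hbi] at hmemBj
    exact hTI (Finset.mem_union_left _ (Finset.mem_biUnion.2 ⟨j, Finset.mem_univ _, hmemBj⟩))


end Combine

/-- For connected building sets `B₁, …, B_r` on pairwise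
disjoint finite sets `S₁, …, S_r`, the `h`-polynomial of the combined connected
building set `B = B₁ ⊔ ⋯ ⊔ B_r ⊔ {S}` on `S = S₁ ∪ ⋯ ∪ S_r` satisfies
`h_B(t) = (1 + t + ⋯ + t^{r-1}) ∏ᵢ h_{Bᵢ}(t)` in `ℤ[t]`. -/
theorem hPoly_combined_building_set
    (r : ℕ) (hr : 0 < r)
    (S : Fin r → Finset ℕ) (B : Fin r → Finset (Finset ℕ))
    (hpos : ∀ i, ∀ x ∈ S i, 0 < x)
    (hdisj : ∀ i j, i ≠ j → Disjoint (S i) (S j))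
    (hB : ∀ i, IsConnBuildingSet (S i) (B i))
    (Sc : Finset ℕ) (hSc : Sc = Finset.univ.biUnion S)
    (Bc : Finset (Finset ℕ)) (hBc : Bc = Finset.univ.biUnion B ∪ {Sc}) :
    (∑ᶠ T ∈ {T : RTree Sc | IsBTree Sc Bc T},
        (Polynomial.X : Polynomial ℤ) ^ T.des)
      = (∑ i ∈ Finset.range r, (Polynomial.X : Polynomial ℤ) ^ i) *
        ∏ i : Fin r,
          ∑ᶠ T ∈ {T : RTree (S i) | IsBTree (S i) (B i) T},
            (Polynomial.X : Polynomial ℤ) ^ T.des := by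
    classical
  subst hSc
  subst hBc
  set t : ∀ i : Fin r, Finset (RTree (S i)) :=
    fun i => (Set.toFinite {T : RTree (S i) | IsBTree (S i) (B i) T}).toFinset with ht
  have hmemt : ∀ (i : Fin r) (T : RTree (S i)), T ∈ t i ↔ IsBTree (S i) (B i) T := by
    intro i T
    simp only [ht, Set.Finite.mem_toFinset, Set.mem_setOf_eq]
  have hfinc : ({T : RTree (Finset.univ.biUnion S) |
      IsBTree (Finset.univ.biUnion S) (Finset.univ.biUnion B ∪ {Finset.univ.biUnion S}) T}).Finite :=
    Set.toFinite _
  rw [finsum_mem_eq_finite_toFinset_sum _ hfinc]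
  have hprod : ∀ i : Fin r,
      (∑ᶠ T ∈ {T : RTree (S i) | IsBTree (S i) (B i) T}, (Polynomial.X : Polynomial ℤ) ^ T.des)
        = ∑ T ∈ t i, (Polynomial.X : Polynomial ℤ) ^ T.des := fun i =>
    finsum_mem_eq_finite_toFinset_sum _ (Set.toFinite _)
  rw [Finset.prod_congr rfl fun i _ => hprod i, Finset.prod_univ_sum, Finset.mul_sum]
  have hstep : ∀ p ∈ Fintype.piFinset t,
      (∑ i ∈ Finset.range r, (Polynomial.X : Polynomial ℤ) ^ i) *
          ∏ i, (Polynomial.X : Polynomial ℤ) ^ (p i).des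
        = ∑ i₀ : Fin r, (Polynomial.X : Polynomial ℤ) ^
            ((Finset.univ.filter fun j => (p i₀).root < (p j).root).card + ∑ j, (p j).des) := by
    intro p _
    have hρinj : Function.Injective fun j => (p j).root := by
      intro a b hab
      simp only at hab
      exact idx_unique hdisj ((p a).root_mem) (by rw [hab]; exact (p b).root_mem)
    rw [← rank_sum _ hρinj, Finset.sum_mul]
    refine Finset.sum_congr rfl fun i₀ _ => ?_
    rw [Finset.prod_pow_eq_pow_sum, ← pow_add]
  rw [Finset.sum_congr rfl hstep, ← Finset.sum_product']
  symm
  refine Finset.sum_bij (fun (a : ((i : Fin r) → RTree (S i)) × Fin r) _ =>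
    assemble hdisj a.1 a.2) ?_ ?_ ?_ ?_
  · intro a ha
    rw [Set.Finite.mem_toFinset]
    refine isBTree_assemble hdisj a.1 a.2 hB fun j => ?_
    exact (hmemt j (a.1 j)).1 (Fintype.mem_piFinset.1 (Finset.mem_product.1 ha).1 j)
  · intro a ha b hb hab
    obtain ⟨h1, h2⟩ := assemble_inj hdisj hab
    exact Prod.ext h2 h1
  · intro T hT
    rw [Set.Finite.mem_toFinset] at hT
    obtain ⟨a, q, hq, heq⟩ := assemble_surj hdisj hB T hT
    refine ⟨(q, a), ?_, heq⟩
    rw [Finset.mem_product]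
    exact ⟨Fintype.mem_piFinset.2 fun j => (hmemt j (q j)).2 (hq j), Finset.mem_univ _⟩
  · intro a ha
    rw [des_assemble hdisj a.1 a.2]
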